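/- In the setting of the previous statement, if all eigenvalues λ_i are positive, then f(t) → Y as t → ∞. -/

import Mathlib

open Matrix Filter Real

theorem ntk_convergence_of_pos_eigenvalues (n : ℕ) (K : Matrix (Fin n) (Fin n) ℝ)
    (hK : K.IsSymm) (q : Fin n → Fin n → ℝ) (lam : Fin n → ℝ)
    (horth : ∀ i j, dotProduct (q i) (q j) = if i = j then 1 else 0)
    (heig : ∀ i, K.mulVec (q i) = lam i • q i)
    (hbasis : ∀ x : Fin n → ℝ, x ∈ Submodule.span ℝ (Set.range q))
    (hpos : ∀ i, 0 < lam i)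
    (Y f₀ : Fin n → ℝ) (f : ℝ → Fin n → ℝ)
    (hf : ∀ t : ℝ, HasDerivAt f (-(K.mulVec (f t - Y))) t) (hf0 : f 0 = f₀) :
    Filter.Tendsto f Filter.atTop (nhds Y) := by
  set g : ℝ → Fin n → ℝ := fun t => f t - Y with hgdef
  have hg : ∀ t, HasDerivAt g (-(K.mulVec (g t))) t := by
    intro t
    exact (hf t).sub_const Y
  -- coefficients
  set c : Fin n → ℝ → ℝ := fun i t => g t ⬝ᵥ q i with hcdef
  -- symmetric matrix moves across dot product
  have hsym : ∀ (x : Fin n → ℝ) i, K.mulVec x ⬝ᵥ q i = lam i * (x ⬝ᵥ q i) := by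
    intro x i
    have : K.mulVec x ⬝ᵥ q i = x ⬝ᵥ K.mulVec (q i) := by
      rw [dotProduct_comm, dotProduct_mulVec, ← Matrix.vecMul_transpose, hK.eq,
        dotProduct_comm]
    rw [this, heig i, dotProduct_smul, smul_eq_mul]
  have hc : ∀ i t, HasDerivAt (c i) (-(lam i * c i t)) t := by
    intro i t
    have h1 : HasDerivAt (fun s => g s ⬝ᵥ q i) (-(K.mulVec (g t)) ⬝ᵥ q i) t := by
      have hj : ∀ j : Fin n, HasDerivAt (fun s => g s j)
          ((-(K.mulVec (g t))) j) t := by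
        intro j
        exact ((ContinuousLinearMap.proj j : (Fin n → ℝ) →L[ℝ] ℝ).hasFDerivAt.comp_hasDerivAt
          t (hg t))
      have := HasDerivAt.fun_sum (u := Finset.univ) (A := fun j s => g s j * q i j)
        (A' := fun j => (-(K.mulVec (g t))) j * q i j)
        (fun j _ => (hj j).mul_const (q i j))
      simpa [dotProduct] using this
    have heq : (-(K.mulVec (g t))) ⬝ᵥ q i = -(lam i * c i t) := by
      rw [neg_dotProduct, hsym]
    rw [heq] at h1
    exact h1
  -- exponential decay of coefficients
  have hdecay : ∀ i t, c i t = c i 0 * Real.exp (-(lam i * t)) := by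
    intro i t
    set u : ℝ → ℝ := fun s => Real.exp (lam i * s) * c i s with hudef
    have hu : ∀ s, HasDerivAt u 0 s := by
      intro s
      have hlin : HasDerivAt (fun s : ℝ => lam i * s) (lam i) s := by
        simpa using (hasDerivAt_id s).const_mul (lam i)
      have hu0 : HasDerivAt (fun s => Real.exp (lam i * s) * c i s)
          (Real.exp (lam i * s) * lam i * c i s
            + Real.exp (lam i * s) * -(lam i * c i s)) s := hlin.exp.mul (hc i s)
      have hz : Real.exp (lam i * s) * lam i * c i s
            + Real.exp (lam i * s) * -(lam i * c i s) = 0 := by ring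
      rw [hz] at hu0
      exact hu0
    have hconst : u t = u 0 := by
      have : ∀ s, u s = u 0 := fun s =>
        is_const_of_deriv_eq_zero (fun x => (hu x).differentiableAt)
          (fun x => (hu x).deriv) s 0
      exact this t
    have : Real.exp (lam i * t) * c i t = Real.exp (lam i * 0) * c i 0 := hconst
    rw [mul_zero, Real.exp_zero, one_mul] at this
    rw [Real.exp_neg, ← div_eq_mul_inv, eq_div_iff (Real.exp_ne_zero _)]
    linarith [this]
  -- expansion in eigenbasis
  have hexpand : ∀ t, g t = ∑ i, c i t • q i := by
    intro t
    obtain ⟨a, ha⟩ := (Submodule.mem_span_range_iff_exists_fun (R := ℝ)).1 (hbasis (g t))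
    have hai : ∀ i, c i t = a i := by
      intro i
      have h1 : (∑ j, a j • q j) ⬝ᵥ q i = ∑ j, a j * (q j ⬝ᵥ q i) := by
        simp only [dotProduct, Finset.sum_apply, Pi.smul_apply, smul_eq_mul,
          Finset.sum_mul, Finset.mul_sum, mul_assoc]
        rw [Finset.sum_comm]
      simp only [hcdef, ← ha, h1, horth]
      simp
    rw [← ha]
    exact Finset.sum_congr rfl fun i _ => by rw [hai i]
  -- convergence
  have hfun : ∀ t, f t = Y + ∑ i, (c i 0 * Real.exp (-(lam i * t))) • q i := by
    intro t
    have := hexpand t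
    simp only [hgdef] at this
    have h2 : ∑ i, c i t • q i = ∑ i, (c i 0 * Real.exp (-(lam i * t))) • q i :=
      Finset.sum_congr rfl fun i _ => by rw [hdecay i t]
    rw [← h2, ← this]
    abel
  have htend : Tendsto (fun t => Y + ∑ i, (c i 0 * Real.exp (-(lam i * t))) • q i)
      atTop (nhds (Y + ∑ i : Fin n, (0:ℝ) • q i)) := by
    refine tendsto_const_nhds.add (tendsto_finset_sum _ fun i _ => ?_)
    have h1 : Tendsto (fun t : ℝ => lam i * t) atTop atTop :=
      Tendsto.const_mul_atTop (hpos i) tendsto_id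
    have h2 : Tendsto (fun t : ℝ => Real.exp (-(lam i * t))) atTop (nhds 0) :=
      Real.tendsto_exp_neg_atTop_nhds_zero.comp h1
    have h3 : Tendsto (fun t : ℝ => c i 0 * Real.exp (-(lam i * t))) atTop (nhds 0) := by
      simpa using h2.const_mul (c i 0)
    simpa using h3.smul_const (q i)
  simp only [zero_smul, Finset.sum_const_zero, add_zero] at htend
  exact htend.congr fun t => (hfun t).symm
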